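/- Let D be a Young diagram, p, q coprime positive integers, K a positive integer, P = Kp, Q = Kq, such that every box (x,y) of D satisfies qx + py \leq Kpq - p - q. Fix non-negative integers a, l with p·l \geq q·(a+1). If (a, Q-1-l) \in R_{P,Q} \ D, then the number of boxes c \in D with a(c) = a and l(c) = l is one less than the number of boxes in R_{P,Q} \ D with arm a and leg l, where R_{P,Q} = {0,...,P-1} \times {0,...,Q-1}. -/

import Mathlib

/-- A Young diagram: a finite down-closed subset of ℕ². -/
def IsYoung (D : Finset (ℕ × ℕ)) : Prop :=
  ∀ x y x' y', (x, y) ∈ D → x' ≤ x → y' ≤ y → (x', y') ∈ D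

/-- Arm length of a box inside the diagram. -/
def arm (D : Finset (ℕ × ℕ)) (c : ℕ × ℕ) : ℕ :=
  (D.filter fun d => d.2 = c.2 ∧ c.1 < d.1).card

/-- Leg length of a box inside the diagram. -/
def leg (D : Finset (ℕ × ℕ)) (c : ℕ × ℕ) : ℕ :=
  (D.filter fun d => d.1 = c.1 ∧ c.2 < d.2).card

/-- Arm length of a box in the complement of the diagram. -/
def coArm (D : Finset (ℕ × ℕ)) (c : ℕ × ℕ) : ℕ :=
  ((Finset.range c.1).filter fun x' => (x', c.2) ∉ D).card

/-- Leg length of a box in the complement of the diagram. -/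
def coLeg (D : Finset (ℕ × ℕ)) (c : ℕ × ℕ) : ℕ :=
  ((Finset.range c.2).filter fun y' => (c.1, y') ∉ D).card

open Finset

namespace RatHook

def ht (D : Finset (ℕ × ℕ)) (x : ℕ) : ℕ := (D.filter fun d => d.1 = x).card
def wd (D : Finset (ℕ × ℕ)) (y : ℕ) : ℕ := (D.filter fun d => d.2 = y).card

lemma mem_iff_ht {D : Finset (ℕ × ℕ)} (hD : IsYoung D) (x y : ℕ) :
    (x, y) ∈ D ↔ y < ht D x := by
  constructor
  · intro hxy
    have hc : (range (y+1)).card ≤ (D.filter fun d => d.1 = x).card := by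
      apply Finset.card_le_card_of_injOn (fun k => ((x, k) : ℕ × ℕ))
      · intro k hk
        simp only [mem_coe, mem_range] at hk
        exact mem_filter.mpr ⟨hD x y x k hxy le_rfl (by omega), rfl⟩
      · intro k _ k' _ h
        simpa using h
    simp only [card_range] at hc
    simpa [ht] using hc
  · intro hy
    by_contra hxy
    have hsub : (D.filter fun d => d.1 = x) ⊆ (range y).image (fun k => ((x, k) : ℕ × ℕ)) := by
      intro d hd
      rw [mem_filter] at hd
      have hd2 : d.2 < y := by
        by_contra hge
        exact hxy (hD d.1 d.2 x y (by simpa using hd.1) (le_of_eq hd.2.symm) (by omega))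
      simp only [mem_image, mem_range]
      exact ⟨d.2, hd2, by rw [← hd.2]⟩
    have := Finset.card_le_card hsub
    have h2 := Finset.card_image_le (s := range y) (f := fun k => ((x, k) : ℕ × ℕ))
    simp only [card_range] at h2
    have : ht D x ≤ y := le_trans this h2
    omega

lemma mem_iff_wd {D : Finset (ℕ × ℕ)} (hD : IsYoung D) (x y : ℕ) :
    (x, y) ∈ D ↔ x < wd D y := by
  constructor
  · intro hxy
    have hc : (range (x+1)).card ≤ (D.filter fun d => d.2 = y).card := by
      apply Finset.card_le_card_of_injOn (fun k => ((k, y) : ℕ × ℕ))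
      · intro k hk
        simp only [mem_coe, mem_range] at hk
        exact mem_filter.mpr ⟨hD x y k y hxy (by omega) le_rfl, rfl⟩
      · intro k _ k' _ h
        exact congrArg Prod.fst h
    simp only [card_range] at hc
    simpa [wd] using hc
  · intro hx
    by_contra hxy
    have hsub : (D.filter fun d => d.2 = y) ⊆ (range x).image (fun k => ((k, y) : ℕ × ℕ)) := by
      intro d hd
      rw [mem_filter] at hd
      have hd1 : d.1 < x := by
        by_contra hge
        exact hxy (hD d.1 d.2 x y (by simpa using hd.1) (by omega) (le_of_eq hd.2.symm))
      simp only [mem_image, mem_range]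
      exact ⟨d.1, hd1, by rw [← hd.2]⟩
    have := Finset.card_le_card hsub
    have h2 := Finset.card_image_le (s := range x) (f := fun k => ((k, y) : ℕ × ℕ))
    simp only [card_range] at h2
    have : wd D y ≤ x := le_trans this h2
    omega

lemma ht_anti {D : Finset (ℕ × ℕ)} (hD : IsYoung D) {x x' : ℕ} (h : x ≤ x') :
    ht D x' ≤ ht D x := by
  by_contra hc
  push_neg at hc
  have h1 : (x', ht D x) ∈ D := (mem_iff_ht hD _ _).2 hc
  have h2 := hD x' (ht D x) x (ht D x) h1 h le_rfl
  have := (mem_iff_ht hD x (ht D x)).1 h2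
  omega

lemma wd_anti {D : Finset (ℕ × ℕ)} (hD : IsYoung D) {y y' : ℕ} (h : y ≤ y') :
    wd D y' ≤ wd D y := by
  by_contra hc
  push_neg at hc
  have h1 : (wd D y, y') ∈ D := (mem_iff_wd hD _ _).2 hc
  have h2 := hD (wd D y) y' (wd D y) y h1 le_rfl h
  have := (mem_iff_wd hD (wd D y) y).1 h2
  omega

lemma arm_eq {D : Finset (ℕ × ℕ)} (hD : IsYoung D) {c : ℕ × ℕ} (hc : c ∈ D) :
    c.1 + 1 + arm D c = wd D c.2 := by
  have hlt : c.1 < wd D c.2 := (mem_iff_wd hD c.1 c.2).1 (by simpa using hc)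
  have himg : (D.filter fun d => d.2 = c.2 ∧ c.1 < d.1)
      = (Ioo c.1 (wd D c.2)).image (fun k => ((k, c.2) : ℕ × ℕ)) := by
    ext d
    simp only [mem_filter, mem_image, mem_Ioo]
    constructor
    · rintro ⟨hd, h2, h1⟩
      exact ⟨d.1, ⟨h1, (mem_iff_wd hD d.1 c.2).1 (by rw [← h2]; simpa using hd)⟩, by rw [← h2]⟩
    · rintro ⟨k, ⟨hk1, hk2⟩, rfl⟩
      exact ⟨(mem_iff_wd hD k c.2).2 hk2, rfl, hk1⟩
  have hcard : arm D c = (Ioo c.1 (wd D c.2)).card := by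
    rw [arm, himg, Finset.card_image_of_injective]
    intro k k' h
    exact congrArg Prod.fst h
  rw [hcard, Nat.card_Ioo]
  omega

lemma leg_eq {D : Finset (ℕ × ℕ)} (hD : IsYoung D) {c : ℕ × ℕ} (hc : c ∈ D) :
    c.2 + 1 + leg D c = ht D c.1 := by
  have hlt : c.2 < ht D c.1 := (mem_iff_ht hD c.1 c.2).1 (by simpa using hc)
  have himg : (D.filter fun d => d.1 = c.1 ∧ c.2 < d.2)
      = (Ioo c.2 (ht D c.1)).image (fun k => ((c.1, k) : ℕ × ℕ)) := by
    ext d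
    simp only [mem_filter, mem_image, mem_Ioo]
    constructor
    · rintro ⟨hd, h1, h2⟩
      exact ⟨d.2, ⟨h2, (mem_iff_ht hD c.1 d.2).1 (by rw [← h1]; simpa using hd)⟩, by rw [← h1]⟩
    · rintro ⟨k, ⟨hk1, hk2⟩, rfl⟩
      exact ⟨(mem_iff_ht hD c.1 k).2 hk2, rfl, hk1⟩
  have hcard : leg D c = (Ioo c.2 (ht D c.1)).card := by
    rw [leg, himg, Finset.card_image_of_injective]
    intro k k' h
    exact congrArg Prod.snd h
  rw [hcard, Nat.card_Ioo]
  omega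

lemma coArm_eq {D : Finset (ℕ × ℕ)} (hD : IsYoung D) (c : ℕ × ℕ) :
    coArm D c = c.1 - wd D c.2 := by
  have : ((Finset.range c.1).filter fun x' => (x', c.2) ∉ D) = Ico (wd D c.2) c.1 := by
    ext x'
    simp only [mem_filter, mem_range, mem_Ico, mem_iff_wd hD x' c.2]
    omega
  rw [coArm, this, Nat.card_Ico]

lemma coLeg_eq {D : Finset (ℕ × ℕ)} (hD : IsYoung D) (c : ℕ × ℕ) :
    coLeg D c = c.2 - ht D c.1 := by
  have : ((Finset.range c.2).filter fun y' => (c.1, y') ∉ D) = Ico (ht D c.1) c.2 := by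
    ext y'
    simp only [mem_filter, mem_range, mem_Ico, mem_iff_ht hD c.1 y']
    omega
  rw [coLeg, this, Nat.card_Ico]


lemma crossing (σ : ℕ → Prop) [DecidablePred σ] (m N a : ℕ)
    (ham : a + 1 ≤ m) (hmN : m ≤ N)
    (hlow : ∀ j ≤ m, σ j) (hhigh : ∀ j, N < j → ¬ σ j) :
    ((range N).filter fun i => σ (i+1) ∧ ¬σ (i+1+m) ∧
        ((Icc (i+1) (i+m)).filter σ).card = a+1).card
      = ((range N).filter fun i => ¬σ (i+1) ∧ σ (i+1+m) ∧
        ((Icc (i+1+1) (i+1+m)).filter σ).card = a+1).card + 1 := by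
  set F : ℕ → ℕ := fun i => ((Icc (i+1) (i+m)).filter σ).card with hF
  have hFstep : ∀ i, F i + (if σ (i+1+m) then 1 else 0)
      = F (i+1) + (if σ (i+1) then 1 else 0) := by
    intro i
    have h1 : Icc (i+1) (i+m) = insert (i+1) (Icc (i+2) (i+m)) := by
      ext j; simp only [mem_Icc, mem_insert]; omega
    have h2 : Icc (i+1+1) (i+1+m) = insert (i+1+m) (Icc (i+2) (i+m)) := by
      ext j; simp only [mem_Icc, mem_insert]; omega
    have h3 : (i+1) ∉ (Icc (i+2) (i+m)).filter σ := by
      intro h; have := (mem_filter.1 h).1; simp only [mem_Icc] at this; omega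
    have h4 : (i+1+m) ∉ (Icc (i+2) (i+m)).filter σ := by
      intro h; have := (mem_filter.1 h).1; simp only [mem_Icc] at this; omega
    have e1 : F i = ((Icc (i+2) (i+m)).filter σ).card + (if σ (i+1) then 1 else 0) := by
      rw [hF]; simp only []
      rw [h1, filter_insert]
      split_ifs
      · rw [card_insert_of_notMem h3]
      · rfl
    have e2 : F (i+1) = ((Icc (i+2) (i+m)).filter σ).card + (if σ (i+1+m) then 1 else 0) := by
      rw [hF]; simp only []
      rw [h2, filter_insert]
      split_ifs
      · rw [card_insert_of_notMem h4]
      · rfl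
    omega
  set G : ℕ → ℤ := fun i => if a + 1 ≤ F i then 1 else 0 with hG
  have hG0 : G 0 = 1 := by
    have hIcc : Icc (0+1) (0+m) = Icc 1 m := by norm_num
    have hfull : (Icc 1 m).filter σ = Icc 1 m :=
      filter_true_of_mem (fun j hj => hlow j (mem_Icc.1 hj).2)
    have hF0 : F 0 = m := by
      rw [hF]; simp only []; rw [hIcc, hfull, Nat.card_Icc]; omega
    rw [hG]; simp only [hF0]
    rw [if_pos ham]
  have hGN : G N = 0 := by
    have hempty : (Icc (N+1) (N+m)).filter σ = ∅ := by
      apply filter_eq_empty_iff.2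
      intro j hj
      exact hhigh j (by have := (mem_Icc.1 hj).1; omega)
    have hFN : F N = 0 := by rw [hF]; simp only []; rw [hempty, card_empty]
    rw [hG]; simp only [hFN]
    rw [if_neg (by omega)]
  have key : ∀ i, (if σ (i+1) ∧ ¬σ (i+1+m) ∧ F i = a+1 then (1:ℤ) else 0)
      - (if ¬σ (i+1) ∧ σ (i+1+m) ∧ F (i+1) = a+1 then 1 else 0) = G i - G (i+1) := by
    intro i
    have h := hFstep i
    rw [hG]
    by_cases s1 : σ (i+1) <;> by_cases s2 : σ (i+1+m) <;>
      simp only [s1, s2, if_true, if_false, true_and, false_and, and_false, and_true,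
        not_true, not_false_iff, if_false] <;>
      simp only [s1, s2, if_true, if_false] at h <;>
      split_ifs <;> omega
  have hsum : ∑ i ∈ range N, ((if σ (i+1) ∧ ¬σ (i+1+m) ∧ F i = a+1 then (1:ℤ) else 0)
      - (if ¬σ (i+1) ∧ σ (i+1+m) ∧ F (i+1) = a+1 then 1 else 0)) = 1 := by
    rw [Finset.sum_congr rfl (fun i _ => key i), Finset.sum_range_sub' G N, hG0, hGN]
    norm_num
  rw [Finset.sum_sub_distrib] at hsum
  rw [Finset.sum_boole, Finset.sum_boole] at hsum
  have hd : ((range N).filter fun i => σ (i+1) ∧ ¬σ (i+1+m) ∧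
      ((Icc (i+1) (i+m)).filter σ).card = a+1) =
      (range N).filter fun i => σ (i+1) ∧ ¬σ (i+1+m) ∧ F i = a+1 := rfl
  have hu : ((range N).filter fun i => ¬σ (i+1) ∧ σ (i+1+m) ∧
      ((Icc (i+1+1) (i+1+m)).filter σ).card = a+1) =
      (range N).filter fun i => ¬σ (i+1) ∧ σ (i+1+m) ∧ F (i+1) = a+1 := rfl
  rw [hd, hu]
  omega


end RatHook


namespace RatHook

/-- `sigP D P m j` says that position `j` of the (shifted) boundary sequence is a
column step, i.e. `j = ht D x - x + P + m` for some column `x`. -/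
def sigP (D : Finset (ℕ × ℕ)) (P m j : ℕ) : Prop :=
  ∃ x ∈ Finset.range (D.card + P + m + 1), ht D x + P + m = j + x

instance sigP_dec (D : Finset (ℕ × ℕ)) (P m j : ℕ) : Decidable (sigP D P m j) := by
  unfold sigP; infer_instance

lemma ht_le_card (D : Finset (ℕ × ℕ)) (x : ℕ) : ht D x ≤ D.card :=
  Finset.card_filter_le _ _

lemma sig_intro {D : Finset (ℕ × ℕ)} {P m j x : ℕ}
    (h : ht D x + P + m = j + x) : sigP D P m j := by
  refine ⟨x, ?_, h⟩
  have := ht_le_card D x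
  simp only [mem_range]
  omega

lemma sig_elim {D : Finset (ℕ × ℕ)} {P m j : ℕ} (h : sigP D P m j) :
    ∃ x, ht D x + P + m = j + x := by
  obtain ⟨x, _, hx⟩ := h
  exact ⟨x, hx⟩

/-- window count, down-event version: window `[i+1, i+m]`. -/
lemma window_card {D : Finset (ℕ × ℕ)} (hD : IsYoung D) {P m i x y : ℕ}
    (hx : ht D x + P + m = i + 1 + x)
    (hy : y + 1 + P + m = i + 1 + m + wd D y) :
    ((Icc (i+1) (i+m)).filter (sigP D P m)).card = x + 1 - wd D y := by
  rw [← Nat.card_Icc (wd D y) x]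
  symm
  apply Finset.card_bij (fun x' _ => ht D x' + P + m - x')
  · intro x' hx'
    rw [mem_Icc] at hx'
    have hanti : ht D x ≤ ht D x' := ht_anti hD hx'.2
    have hkey : (ht D x' + P + m - x') + x' = ht D x' + P + m := by omega
    have hle : ht D x' ≤ y := by
      by_contra hgt
      push_neg at hgt
      have := (mem_iff_wd hD x' y).1 ((mem_iff_ht hD x' y).2 hgt)
      omega
    rw [mem_filter, mem_Icc]
    refine ⟨⟨by omega, by omega⟩, sig_intro hkey.symm⟩
  · intro x1 h1 x2 h2 heq
    rw [mem_Icc] at h1 h2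
    rcases lt_trichotomy x1 x2 with h | h | h
    · have := ht_anti hD (le_of_lt h)
      have e1 : ht D x1 + P + m ≥ i + 1 + x1 := by
        have := ht_anti hD h1.2; omega
      omega
    · exact h
    · have := ht_anti hD (le_of_lt h)
      have e1 : ht D x2 + P + m ≥ i + 1 + x2 := by
        have := ht_anti hD h2.2; omega
      omega
  · intro j hj
    rw [mem_filter, mem_Icc] at hj
    obtain ⟨⟨hj1, hj2⟩, hsig⟩ := hj
    obtain ⟨x', hx'⟩ := sig_elim hsig
    have hxle : x' ≤ x := by
      by_contra hgt
      push_neg at hgt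
      have := ht_anti hD (le_of_lt hgt)
      omega
    have hwle : wd D y ≤ x' := by
      by_contra hlt
      push_neg at hlt
      have := (mem_iff_ht hD x' y).1 ((mem_iff_wd hD x' y).2 hlt)
      omega
    exact ⟨x', mem_Icc.mpr ⟨hwle, hxle⟩, by omega⟩

/-- window count, up-event version: window `[i+2, i+1+m]`. -/
lemma window_card' {D : Finset (ℕ × ℕ)} (hD : IsYoung D) {P m i x y : ℕ}
    (hwP : wd D y ≤ P)
    (hy : y + 1 + P + m = i + 1 + wd D y)
    (hx : ht D x + P + m = i + 1 + m + x) :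
    ((Icc (i+1+1) (i+1+m)).filter (sigP D P m)).card = wd D y - x := by
  rw [← Nat.card_Ico x (wd D y)]
  symm
  apply Finset.card_bij (fun x' _ => ht D x' + P + m - x')
  · intro x' hx'
    rw [mem_Ico] at hx'
    have hanti : ht D x' ≤ ht D x := ht_anti hD hx'.1
    have hylt : y < ht D x' := (mem_iff_ht hD x' y).1 ((mem_iff_wd hD x' y).2 hx'.2)
    have hkey : (ht D x' + P + m - x') + x' = ht D x' + P + m := by omega
    rw [mem_filter, mem_Icc]
    refine ⟨⟨by omega, by omega⟩, sig_intro hkey.symm⟩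
  · intro x1 h1 x2 h2 heq
    rw [mem_Ico] at h1 h2
    have k1 : x1 < wd D y := h1.2
    have k2 : x2 < wd D y := h2.2
    rcases lt_trichotomy x1 x2 with h | h | h
    · have := ht_anti hD (le_of_lt h)
      have e1 : y < ht D x1 := (mem_iff_ht hD x1 y).1 ((mem_iff_wd hD x1 y).2 k1)
      omega
    · exact h
    · have := ht_anti hD (le_of_lt h)
      have e2 : y < ht D x2 := (mem_iff_ht hD x2 y).1 ((mem_iff_wd hD x2 y).2 k2)
      omega
  · intro j hj
    rw [mem_filter, mem_Icc] at hj
    obtain ⟨⟨hj1, hj2⟩, hsig⟩ := hj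
    obtain ⟨x', hx'⟩ := sig_elim hsig
    have hxle : x ≤ x' := by
      by_contra hgt
      push_neg at hgt
      have := ht_anti hD (le_of_lt hgt)
      omega
    have hwlt : x' < wd D y := by
      by_contra hge
      push_neg at hge
      have hle : ht D x' ≤ y := by
        by_contra hgt
        push_neg at hgt
        have := (mem_iff_wd hD x' y).1 ((mem_iff_ht hD x' y).2 hgt)
        omega
      omega
    exact ⟨x', mem_Ico.mpr ⟨hxle, hwlt⟩, by omega⟩

/-- covering: every non-column position of the boundary sequence (past the initial
all-ones segment) is a row position. -/
lemma cover {D : Finset (ℕ × ℕ)} (hD : IsYoung D) {P m j : ℕ}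
    (hP : ∀ x, P ≤ x → ht D x = 0)
    (hj : m < j) (hns : ¬ sigP D P m j) :
    ∃ y, y + 1 + P + m = j + wd D y := by
  have hnsig : ∀ x, ht D x + P + m ≠ j + x := by
    intro x hx
    exact hns (sig_intro hx)
  have hex : ∃ x, ht D x + P + m < j + x := by
    refine ⟨P + j, ?_⟩
    have := hP (P + j) (by omega)
    omega
  let x₀ := Nat.find hex
  have hx₀ : ht D x₀ + P + m < j + x₀ := Nat.find_spec hex
  have hmin : ∀ x, x < x₀ → ¬(ht D x + P + m < j + x) := fun x hx => Nat.find_min hex hx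
  have hyge : P + m + 1 ≤ j + x₀ := by omega
  refine ⟨j + x₀ - (P + m + 1), ?_⟩
  have hwd : wd D (j + x₀ - (P + m + 1)) = x₀ := by
    set y := j + x₀ - (P + m + 1) with hydef
    have hup : ∀ x'', x₀ ≤ x'' → ¬((x'', y) ∈ D) := by
      intro x'' hx''
      have h1 : ht D x'' ≤ ht D x₀ := ht_anti hD hx''
      intro hmem
      have := (mem_iff_ht hD x'' y).1 hmem
      omega
    have hdown : ∀ x'', x'' < x₀ → (x'', y) ∈ D := by
      intro x'' hx''
      have hx₀pos : 1 ≤ x₀ := by omega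
      have h1 : ¬(ht D (x₀ - 1) + P + m < j + (x₀ - 1)) := hmin (x₀ - 1) (by omega)
      have h2 : ht D (x₀ - 1) + P + m ≠ j + (x₀ - 1) := hnsig (x₀ - 1)
      have h3 : ht D x'' ≥ ht D (x₀ - 1) := ht_anti hD (by omega)
      exact (mem_iff_ht hD x'' y).2 (by omega)
    have hlo : x₀ ≤ wd D y := by
      rcases Nat.eq_zero_or_pos x₀ with h0 | h0
      · omega
      · have := (mem_iff_wd hD (x₀ - 1) y).1 (hdown (x₀ - 1) (by omega))
        omega
    have hhi : wd D y ≤ x₀ := by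
      by_contra hc
      push_neg at hc
      exact hup x₀ le_rfl ((mem_iff_wd hD x₀ y).2 hc)
    omega
  omega


end RatHook


open RatHook

theorem inside_rectangle_case_outside (D : Finset (ℕ × ℕ)) (hD : IsYoung D)
    (p q K : ℕ) (hp : 0 < p) (hq : 0 < q) (hK : 0 < K) (hpq : Nat.Coprime p q)
    (hdiag : ∀ c ∈ D, q * c.1 + p * c.2 + p + q ≤ K * p * q)
    (a l : ℕ) (ha : a < K * p) (hl : l < K * q)
    (hslope : q * (a + 1) ≤ p * l)
    (hbox : (a, K * q - 1 - l) ∉ D) :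
    (D.filter fun c => arm D c = a ∧ leg D c = l).card + 1
      = (((Finset.range (K * p)) ×ˢ (Finset.range (K * q))).filter
          fun c => c ∉ D ∧ coArm D c = a ∧ coLeg D c = l).card := by
  set P := K * p with hPdef
  set Q := K * q with hQdef
  set m := a + l + 1 with hmdef
  have hPq : K * p * q = q * P := by rw [hPdef]; ring
  have hQp : K * p * q = p * Q := by rw [hQdef]; ring
  -- rectangle bounds for members of D
  have hrect : ∀ c ∈ D, c.1 < P ∧ c.2 < Q := by
    intro c hc
    have h := hdiag c hc
    constructor
    · have h1 : q * (c.1 + 1) ≤ q * P := by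
        have e : q * (c.1 + 1) = q * c.1 + q := by ring
        have e2 : P * q = q * P := by ring
        linarith [Nat.zero_le (p * c.2), Nat.zero_le p]
      have := Nat.le_of_mul_le_mul_left h1 hq
      omega
    · have h1 : p * (c.2 + 1) ≤ p * Q := by
        have e : p * (c.2 + 1) = p * c.2 + p := by ring
        have e2 : P * q = p * Q := by rw [hPdef, hQdef]; ring
        linarith [Nat.zero_le (q * c.1), Nat.zero_le q]
      have := Nat.le_of_mul_le_mul_left h1 hp
      omega
  have hh0 : ∀ x, P ≤ x → ht D x = 0 := by
    intro x hx
    by_contra hne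
    have hmem : (x, 0) ∈ D := (mem_iff_ht hD x 0).2 (by omega)
    have := (hrect _ hmem).1
    omega
  have hw0 : ∀ y, Q ≤ y → wd D y = 0 := by
    intro y hy
    by_contra hne
    have hmem : (0, y) ∈ D := (mem_iff_wd hD 0 y).2 (by omega)
    have := (hrect _ hmem).2
    omega
  have hhQ : ∀ x, ht D x ≤ Q := by
    intro x
    rcases Nat.eq_zero_or_pos (ht D x) with h0 | h0
    · omega
    · have hmem : (x, ht D x - 1) ∈ D := (mem_iff_ht hD x _).2 (by omega)
      have := (hrect _ hmem).2
      omega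
  have hwP : ∀ y, wd D y ≤ P := by
    intro y
    rcases Nat.eq_zero_or_pos (wd D y) with h0 | h0
    · omega
    · have hmem : (wd D y - 1, y) ∈ D := (mem_iff_wd hD _ y).2 (by omega)
      have := (hrect _ hmem).1
      omega
  have disj : ∀ x' y, ht D x' + wd D y ≠ y + 1 + x' := by
    intro x' y
    by_cases hc : x' < wd D y
    · have := (mem_iff_ht hD x' y).1 ((mem_iff_wd hD x' y).2 hc)
      omega
    · push_neg at hc
      have hle : ¬ y < ht D x' := fun hgt => by
        have := (mem_iff_wd hD x' y).1 ((mem_iff_ht hD x' y).2 hgt)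
        omega
      omega
  set N := P + Q + m with hNdef
  have σlow : ∀ j ≤ m, sigP D P m j := by
    intro j hj
    have h0 : ht D (P + m - j) = 0 := hh0 _ (by omega)
    exact sig_intro (show ht D (P + m - j) + P + m = j + (P + m - j) by omega)
  have σhigh : ∀ j, N < j → ¬ sigP D P m j := by
    intro j hj hs
    obtain ⟨x, hx⟩ := sig_elim hs
    have := hhQ x
    omega
  have hcross := crossing (sigP D P m) m N a (by omega) (by omega) σlow σhigh
  -- Bijection A : inside boxes with arm a and leg l  ↔  up-crossings
  have hbijA : (D.filter fun c => arm D c = a ∧ leg D c = l).card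
      = ((range N).filter fun i => ¬ sigP D P m (i+1) ∧ sigP D P m (i+1+m) ∧
          ((Icc (i+1+1) (i+1+m)).filter (sigP D P m)).card = a+1).card := by
    apply Finset.card_bij (fun c _ => c.2 + (P - wd D c.2) + m)
    · intro c hc
      rw [mem_filter] at hc
      obtain ⟨hcD, harm, hleg⟩ := hc
      have h1 : c.1 + 1 + arm D c = wd D c.2 := arm_eq hD hcD
      have h2 : c.2 + 1 + leg D c = ht D c.1 := leg_eq hD hcD
      have hw : wd D c.2 = c.1 + a + 1 := by omega
      have hh : ht D c.1 = c.2 + l + 1 := by omega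
      have hcr := hrect c hcD
      have hwle := hwP c.2
      rw [mem_filter, mem_range]
      refine ⟨by omega, ?_, ?_, ?_⟩
      · intro hs
        obtain ⟨x', hx'⟩ := sig_elim hs
        exact disj x' c.2 (by omega)
      · exact sig_intro (show ht D c.1 + P + m
          = (c.2 + (P - wd D c.2) + m + 1 + m) + c.1 by omega)
      · have hwin := window_card' hD (hwP c.2)
          (show c.2 + 1 + P + m = (c.2 + (P - wd D c.2) + m) + 1 + wd D c.2 by omega)
          (show ht D c.1 + P + m = (c.2 + (P - wd D c.2) + m) + 1 + m + c.1 by omega)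
        rw [hwin]
        omega
    · intro c1 hc1 c2 hc2 heq
      rw [mem_filter] at hc1 hc2
      have h11 : c1.1 + 1 + arm D c1 = wd D c1.2 := arm_eq hD hc1.1
      have h21 : c2.1 + 1 + arm D c2 = wd D c2.2 := arm_eq hD hc2.1
      have hw1 : wd D c1.2 = c1.1 + a + 1 := by have := hc1.2.1; omega
      have hw2 : wd D c2.2 = c2.1 + a + 1 := by have := hc2.2.1; omega
      have hp1 := hwP c1.2
      have hp2 := hwP c2.2
      rcases lt_trichotomy c1.2 c2.2 with h | h | h
      · exfalso
        have := wd_anti hD h.le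
        omega
      · have hww : wd D c1.2 = wd D c2.2 := by rw [h]
        exact Prod.ext (by omega) h
      · exfalso
        have := wd_anti hD h.le
        omega
    · intro i hi
      rw [mem_filter, mem_range] at hi
      obtain ⟨hiN, hns, hs, hcard⟩ := hi
      have hm1 : m < i + 1 := by
        by_contra hle
        exact hns (σlow (i+1) (by omega))
      obtain ⟨y, hy⟩ := cover hD hh0 hm1 hns
      obtain ⟨x, hx⟩ := sig_elim hs
      have hwin := window_card' hD (hwP y) hy hx
      have hax : wd D y = x + a + 1 := by omega
      have hht : ht D x = y + l + 1 := by omega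
      have hcm : (x, y) ∈ D := (mem_iff_ht hD x y).2 (by omega)
      have harm : x + 1 + arm D (x, y) = wd D y := arm_eq hD hcm
      have hlegv : y + 1 + leg D (x, y) = ht D x := leg_eq hD hcm
      refine ⟨(x, y), mem_filter.mpr ⟨hcm, by omega, by omega⟩, ?_⟩
      show y + (P - wd D y) + m = i
      have := hwP y
      omega
  -- Bijection B : outside boxes with coarm a and coleg l  ↔  down-crossings
  have hbijB : (((range P) ×ˢ (range Q)).filter
        fun c => c ∉ D ∧ coArm D c = a ∧ coLeg D c = l).card
      = ((range N).filter fun i => sigP D P m (i+1) ∧ ¬ sigP D P m (i+1+m) ∧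
          ((Icc (i+1) (i+m)).filter (sigP D P m)).card = a+1).card := by
    apply Finset.card_bij (fun c _ => ht D c.1 + (P - 1 - c.1) + m)
    · intro c hc
      rw [mem_filter, mem_product, mem_range, mem_range] at hc
      obtain ⟨⟨hx1, hy1⟩, hnD, hca, hcl⟩ := hc
      have hc12 : (c.1, c.2) ∉ D := by simpa using hnD
      have hwle : wd D c.2 ≤ c.1 := by
        by_contra hlt
        exact hc12 ((mem_iff_wd hD c.1 c.2).2 (by omega))
      have hhle : ht D c.1 ≤ c.2 := by
        by_contra hlt
        exact hc12 ((mem_iff_ht hD c.1 c.2).2 (by omega))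
      rw [coArm_eq hD] at hca
      rw [coLeg_eq hD] at hcl
      have hxv : c.1 = wd D c.2 + a := by omega
      have hyv : c.2 = ht D c.1 + l := by omega
      have hQ1 := hhQ c.1
      rw [mem_filter, mem_range]
      refine ⟨by omega, ?_, ?_, ?_⟩
      · exact sig_intro (show ht D c.1 + P + m
          = (ht D c.1 + (P - 1 - c.1) + m + 1) + c.1 by omega)
      · intro hs
        obtain ⟨x', hx'⟩ := sig_elim hs
        exact disj x' c.2 (by omega)
      · have hwin := window_card hD
          (show ht D c.1 + P + m = (ht D c.1 + (P - 1 - c.1) + m) + 1 + c.1 by omega)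
          (show c.2 + 1 + P + m = (ht D c.1 + (P - 1 - c.1) + m) + 1 + m + wd D c.2 by omega)
        rw [hwin]
        omega
    · intro c1 hc1 c2 hc2 heq
      rw [mem_filter, mem_product, mem_range, mem_range] at hc1 hc2
      obtain ⟨⟨hx1, hy1⟩, hnD1, hca1, hcl1⟩ := hc1
      obtain ⟨⟨hx2, hy2⟩, hnD2, hca2, hcl2⟩ := hc2
      have h12 : (c1.1, c1.2) ∉ D := by simpa using hnD1
      have h22 : (c2.1, c2.2) ∉ D := by simpa using hnD2
      have hhle1 : ht D c1.1 ≤ c1.2 := by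
        by_contra hlt
        exact h12 ((mem_iff_ht hD c1.1 c1.2).2 (by omega))
      have hhle2 : ht D c2.1 ≤ c2.2 := by
        by_contra hlt
        exact h22 ((mem_iff_ht hD c2.1 c2.2).2 (by omega))
      rw [coLeg_eq hD] at hcl1 hcl2
      rcases lt_trichotomy c1.1 c2.1 with h | h | h
      · exfalso
        have := ht_anti hD h.le
        omega
      · have hhh : ht D c1.1 = ht D c2.1 := by rw [h]
        exact Prod.ext h (by omega)
      · exfalso
        have := ht_anti hD h.le
        omega
    · intro i hi
      rw [mem_filter, mem_range] at hi
      obtain ⟨hiN, hs, hns, hcard⟩ := hi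
      obtain ⟨x, hx⟩ := sig_elim hs
      obtain ⟨y, hy⟩ := cover hD hh0 (show m < i + 1 + m by omega) hns
      have hwin := window_card hD hx hy
      have hax : wd D y + a = x := by omega
      have hyval : y = ht D x + l := by omega
      -- x < P
      have hxP : x < P := by
        by_contra hPx
        push_neg at hPx
        have hhx : ht D x = 0 := hh0 x hPx
        have hyl : y = l := by omega
        have hwpos : 1 ≤ wd D y := by omega
        obtain ⟨V, hV⟩ : ∃ V, wd D y = V + 1 := ⟨wd D y - 1, by omega⟩
        have hmem : (V, y) ∈ D := (mem_iff_wd hD V y).2 (by omega)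
        have hd := hdiag _ hmem
        simp only at hd
        rw [hyl] at hd
        have e2 : q * P ≤ q * (V + 1 + a) := Nat.mul_le_mul_left q (by omega)
        have e2' : q * (V + 1 + a) = q * V + q + q * a := by ring
        have hsl : q * a + q ≤ p * l := by
          have : q * (a + 1) = q * a + q := by ring
          linarith
        have e3 : P * q = q * P := by ring
        linarith
      -- y < Q
      have hyQ : y < Q := by
        by_contra hQy
        push_neg at hQy
        have hwy : wd D y = 0 := hw0 y hQy
        have hxa : x = a := by omega
        rw [hxa] at hyval
        have hmem : (a, Q - 1 - l) ∈ D := by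
          apply (mem_iff_ht hD a (Q - 1 - l)).2
          omega
        exact hbox hmem
      have hnD : (x, y) ∉ D := fun hmem => by
        have := (mem_iff_ht hD x y).1 hmem
        omega
      refine ⟨(x, y), mem_filter.mpr ⟨mem_product.mpr ⟨mem_range.mpr hxP, mem_range.mpr hyQ⟩,
        hnD, ?_, ?_⟩, ?_⟩
      · rw [coArm_eq hD]
        show x - wd D y = a
        omega
      · rw [coLeg_eq hD]
        show y - ht D x = l
        omega
      · show ht D x + (P - 1 - x) + m = i
        omega
  rw [hbijA, hbijB, hcross]
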